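/- Let P and Q be p×p real symmetric positive definite matrices and let ε ∈ [0, 1) be such that (1 − ε)·Q ⪯ P ⪯ (1 + ε)·Q in the Loewner order. Then ‖P^{−1/2} − (1 + ε)^{−1/2}·Q^{−1/2}‖ ≤ ((1 − ε)^{−1/2} − (1 + ε)^{−1/2})·‖Q^{−1/2}‖, and consequently ‖P^{−1/2} − Q^{−1/2}‖ ≤ ((1 − ε)^{−1/2} − 2(1 + ε)^{−1/2} + 1)·‖Q^{−1/2}‖. -/

import Mathlib

open Matrix
open scoped Matrix.Norms.L2Operator

/-- The positive semidefinite square root of a real matrix (zero junk value when the matrix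
is not positive semidefinite). -/
noncomputable def matSqrt {n : Type*} [Fintype n] [DecidableEq n]
    (A : Matrix n n ℝ) : Matrix n n ℝ :=
  letI := Classical.propDecidable
  if h : A.PosSemidef then
    h.1.eigenvectorUnitary * diagonal ((RCLike.ofReal : ℝ → ℝ) ∘ Real.sqrt ∘ h.1.eigenvalues) *
      (star h.1.eigenvectorUnitary : Matrix n n ℝ)
  else 0

/-- `A^{−1/2}`: the inverse of the positive semidefinite square root. -/
noncomputable def matInvSqrt {n : Type*} [Fintype n] [DecidableEq n]
    (A : Matrix n n ℝ) : Matrix n n ℝ :=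
  (matSqrt A)⁻¹

namespace Matrix.PosSemidef
variable {n : Type*} [Fintype n] [DecidableEq n]

noncomputable def sqrt {A : Matrix n n ℝ} (hA : A.PosSemidef) : Matrix n n ℝ :=
  hA.1.eigenvectorUnitary * diagonal ((RCLike.ofReal : ℝ → ℝ) ∘ Real.sqrt ∘ hA.1.eigenvalues) *
    (star hA.1.eigenvectorUnitary : Matrix n n ℝ)

open scoped MatrixOrder in
lemma sqrt_eq_cfc {A : Matrix n n ℝ} (hA : A.PosSemidef) : hA.sqrt = CFC.sqrt A := by
  rw [CFC.sqrt_eq_cfc, cfc_nnreal_eq_real _ A, hA.1.cfc_eq]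
  simp only [IsHermitian.cfc, Unitary.conjStarAlgAut_apply, PosSemidef.sqrt]
  congr 4
  funext x
  simp only [Function.comp_apply]
  rw [Real.sqrt]

open scoped MatrixOrder in
lemma posSemidef_sqrt {A : Matrix n n ℝ} (hA : A.PosSemidef) : hA.sqrt.PosSemidef := by
  rw [sqrt_eq_cfc]
  exact nonneg_iff_posSemidef.mp (CFC.sqrt_nonneg A)

open scoped MatrixOrder in
lemma sqrt_mul_self {A : Matrix n n ℝ} (hA : A.PosSemidef) : hA.sqrt * hA.sqrt = A := by
  rw [sqrt_eq_cfc]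
  exact CFC.sqrt_mul_sqrt_self A (nonneg_iff_posSemidef.mpr hA)

open scoped MatrixOrder in
lemma eq_sqrt_of_sq_eq {A B : Matrix n n ℝ} (hA : A.PosSemidef) (hB : B.PosSemidef)
    (hAB : A ^ 2 = B) : A = hB.sqrt := by
  rw [sqrt_eq_cfc, ← hAB, CFC.sqrt_sq A (nonneg_iff_posSemidef.mpr hA)]

end Matrix.PosSemidef

section Aux

set_option linter.unusedSectionVars false

variable {n : Type*} [Fintype n] [DecidableEq n]

lemma myDotSelfNonneg (v : n → ℝ) : 0 ≤ v ⬝ᵥ v :=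
  Finset.sum_nonneg fun _ _ => mul_self_nonneg _

lemma myDotSelfPos {v : n → ℝ} (hv : v ≠ 0) : 0 < v ⬝ᵥ v := by
  rcases (myDotSelfNonneg v).eq_or_lt with h | h
  · exact absurd (by simpa using (dotProduct_self_eq_zero (v := v)).mp h.symm) hv
  · exact h

lemma myTranspose {S : Matrix n n ℝ} (hS : S.IsHermitian) : Sᵀ = S := by
  have := hS
  rw [Matrix.IsHermitian, Matrix.conjTranspose] at this
  exact (Matrix.conjTranspose_eq_transpose_of_trivial S).symm.trans hS

lemma mySymmDotLeft {S : Matrix n n ℝ} (hS : S.IsHermitian) (u v : n → ℝ) :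
    u ⬝ᵥ S *ᵥ v = (S *ᵥ u) ⬝ᵥ v := by
  rw [Matrix.dotProduct_mulVec, ← Matrix.mulVec_transpose, myTranspose hS]

/-- quadratic form as the self dot product of the sqrt image -/
lemma myQuadSqrt {A : Matrix n n ℝ} (hA : A.PosSemidef) (x y : n → ℝ) :
    (hA.sqrt *ᵥ x) ⬝ᵥ (hA.sqrt *ᵥ y) = x ⬝ᵥ A *ᵥ y := by
  rw [← mySymmDotLeft hA.posSemidef_sqrt.isHermitian, Matrix.mulVec_mulVec, hA.sqrt_mul_self]

/-- quadratic form vanishes implies in kernel, for PSD matrices -/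
lemma myPsdKer {A : Matrix n n ℝ} (hA : A.PosSemidef) {x : n → ℝ}
    (h : x ⬝ᵥ A *ᵥ x = 0) : A *ᵥ x = 0 := by
  have hS : hA.sqrt *ᵥ x = 0 := by
    have h1 := myQuadSqrt hA x x
    rw [h] at h1
    exact (dotProduct_self_eq_zero).mp h1
  rw [← hA.sqrt_mul_self, ← Matrix.mulVec_mulVec, hS, Matrix.mulVec_zero]

/-- the sqrt of a positive definite matrix is positive definite -/
lemma myPosDefSqrt {A : Matrix n n ℝ} (hA : A.PosDef) : hA.posSemidef.sqrt.PosDef := by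
  refine Matrix.PosDef.of_dotProduct_mulVec_pos hA.posSemidef.posSemidef_sqrt.isHermitian fun x hx => ?_
  rcases (hA.posSemidef.posSemidef_sqrt.dotProduct_mulVec_nonneg x).eq_or_lt with h | h
  · exfalso
    have hk : hA.posSemidef.sqrt *ᵥ x = 0 :=
      myPsdKer hA.posSemidef.posSemidef_sqrt (by simpa using h.symm)
    have hAx : A *ᵥ x = 0 := by
      rw [← hA.posSemidef.sqrt_mul_self, ← Matrix.mulVec_mulVec, hk, Matrix.mulVec_zero]
    have := hA.dotProduct_mulVec_pos hx
    rw [hAx] at this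
    simpa using this
  · simpa using h

/-- operator monotonicity of the matrix square root -/
lemma mySqrtMono {A B : Matrix n n ℝ} (hA : A.PosSemidef) (hB : B.PosSemidef)
    (hAB : (B - A).PosSemidef) : (hB.sqrt - hA.sqrt).PosSemidef := by
  have hS : (hB.sqrt - hA.sqrt).IsHermitian :=
    hB.posSemidef_sqrt.isHermitian.sub hA.posSemidef_sqrt.isHermitian
  apply hS.posSemidef_iff_eigenvalues_nonneg.mpr
  intro i
  by_contra hneg
  push_neg at hneg
  set t := hS.eigenvalues i with ht
  set v : n → ℝ := ⇑(hS.eigenvectorBasis i) with hv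
  have hv0 : v ≠ 0 := by
    intro h0
    apply hS.eigenvectorBasis.orthonormal.ne_zero i
    ext j
    exact congrFun h0 j
  have heig : (hB.sqrt - hA.sqrt) *ᵥ v = t • v := hS.mulVec_eigenvectorBasis i
  have hx : 0 ≤ v ⬝ᵥ hA.sqrt *ᵥ v := by simpa using hA.posSemidef_sqrt.dotProduct_mulVec_nonneg v
  have hy : 0 ≤ v ⬝ᵥ hB.sqrt *ᵥ v := by simpa using hB.posSemidef_sqrt.dotProduct_mulVec_nonneg v
  have hdecomp : B - A = hB.sqrt * (hB.sqrt - hA.sqrt) + (hB.sqrt - hA.sqrt) * hA.sqrt := by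
    rw [mul_sub, sub_mul, hB.sqrt_mul_self, hA.sqrt_mul_self]
    abel
  have hkey : v ⬝ᵥ (B - A) *ᵥ v = t * (v ⬝ᵥ hB.sqrt *ᵥ v + v ⬝ᵥ hA.sqrt *ᵥ v) := by
    rw [hdecomp, Matrix.add_mulVec, dotProduct_add,
      ← Matrix.mulVec_mulVec, ← Matrix.mulVec_mulVec, mySymmDotLeft hS, heig,
      Matrix.mulVec_smul, dotProduct_smul, smul_dotProduct]
    simp only [smul_eq_mul]
    ring
  have h0 : 0 ≤ v ⬝ᵥ (B - A) *ᵥ v := by simpa using hAB.dotProduct_mulVec_nonneg v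
  have hSv : v ⬝ᵥ hB.sqrt *ᵥ v - v ⬝ᵥ hA.sqrt *ᵥ v = t * (v ⬝ᵥ v) := by
    rw [← dotProduct_sub, ← Matrix.sub_mulVec, heig, dotProduct_smul,
      smul_eq_mul]
  have hvv : 0 < v ⬝ᵥ v := myDotSelfPos hv0
  nlinarith [mul_pos (neg_pos.mpr hneg) hvv]

lemma myOneSubInv {M : Matrix n n ℝ} (hM : M.IsHermitian) (hMd : IsUnit M.det)
    (h1 : (M - 1).PosSemidef) : ((1 : Matrix n n ℝ) - M⁻¹).PosSemidef := by
  refine Matrix.PosSemidef.of_dotProduct_mulVec_nonneg (Matrix.isHermitian_one.sub hM.inv) fun x => ?_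
  set y := M⁻¹ *ᵥ x with hy
  have hx : M *ᵥ y = x := by
    rw [hy, Matrix.mulVec_mulVec, Matrix.mul_nonsing_inv _ hMd, Matrix.one_mulVec]
  have hDy : (M - 1) *ᵥ y = x - y := by rw [Matrix.sub_mulVec, hx, Matrix.one_mulVec]
  have expand : star x ⬝ᵥ ((1 : Matrix n n ℝ) - M⁻¹) *ᵥ x
      = ((M - 1) *ᵥ y) ⬝ᵥ ((M - 1) *ᵥ y) + y ⬝ᵥ (M - 1) *ᵥ y := by
    rw [hDy, Matrix.sub_mulVec, Matrix.one_mulVec, ← hy]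
    simp only [star_trivial, dotProduct_sub, sub_dotProduct]
    ring
  rw [expand]
  have h2 : 0 ≤ y ⬝ᵥ (M - 1) *ᵥ y := by simpa using h1.dotProduct_mulVec_nonneg y
  exact add_nonneg (myDotSelfNonneg _) h2

/-- antitonicity of matrix inversion in the Loewner order -/
lemma myInvAntitone {A B : Matrix n n ℝ} (hA : A.PosDef) (hB : B.PosDef)
    (hAB : (B - A).PosSemidef) : (A⁻¹ - B⁻¹).PosSemidef := by
  set S := hA.posSemidef.sqrt with hSdef
  have hSpd : S.PosDef := myPosDefSqrt hA
  have hSd : IsUnit S.det := hSpd.det_pos.ne'.isUnit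
  set T := S⁻¹ with hTdef
  have hTpd : T.PosDef := hSpd.inv
  have hTh : T.IsHermitian := hTpd.isHermitian
  have hTd : IsUnit T.det := hTpd.det_pos.ne'.isUnit
  have hTS : T * S = 1 := Matrix.nonsing_inv_mul _ hSd
  have hST : S * T = 1 := Matrix.mul_nonsing_inv _ hSd
  have hTinv : T⁻¹ = S := Matrix.nonsing_inv_nonsing_inv S hSd
  have hTAT : T * A * T = 1 := by
    rw [← hA.posSemidef.sqrt_mul_self, ← hSdef, ← Matrix.mul_assoc T S, hTS,
      Matrix.one_mul, hST]
  set M := T * B * T with hM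
  have hMh : M.IsHermitian := by
    rw [hM, Matrix.IsHermitian, Matrix.conjTranspose_mul, Matrix.conjTranspose_mul,
      hTh.eq, hB.isHermitian.eq, Matrix.mul_assoc]
  have hBd : IsUnit B.det := hB.det_pos.ne'.isUnit
  have hMd : IsUnit M.det := by
    rw [hM, Matrix.det_mul, Matrix.det_mul]
    exact (hTd.mul hBd).mul hTd
  have hM1 : (M - 1).PosSemidef := by
    have hconj := hAB.mul_mul_conjTranspose_same T
    rw [hTh.eq] at hconj
    have heq : T * (B - A) * T = M - 1 := by
      rw [Matrix.mul_sub, Matrix.sub_mul, hTAT, hM]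
    rwa [heq] at hconj
  have h1M := myOneSubInv hMh hMd hM1
  have hconj2 := h1M.mul_mul_conjTranspose_same T
  rw [hTh.eq] at hconj2
  have hMinv : T * M⁻¹ * T = B⁻¹ := by
    rw [hM, Matrix.mul_inv_rev, Matrix.mul_inv_rev, hTinv, ← Matrix.mul_assoc T S,
      hTS, Matrix.one_mul, Matrix.mul_assoc B⁻¹ S T, hST, Matrix.mul_one]
  have heq2 : T * (1 - M⁻¹) * T = A⁻¹ - B⁻¹ := by
    rw [Matrix.mul_sub, Matrix.sub_mul, Matrix.mul_one, hMinv]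
    congr 1
    rw [hTdef, ← Matrix.mul_inv_rev, hA.posSemidef.sqrt_mul_self]
  rwa [heq2] at hconj2

lemma myPsdSmul {A : Matrix n n ℝ} (hA : A.PosSemidef) {c : ℝ} (hc : 0 ≤ c) :
    (c • A).PosSemidef := by
  refine Matrix.PosSemidef.of_dotProduct_mulVec_nonneg ?_ fun x => ?_
  · rw [Matrix.IsHermitian, Matrix.conjTranspose_smul, hA.1.eq, star_trivial]
  · rw [Matrix.smul_mulVec, dotProduct_smul, smul_eq_mul]
    exact mul_nonneg hc (hA.dotProduct_mulVec_nonneg x)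

lemma myPdSmul {A : Matrix n n ℝ} (hA : A.PosDef) {c : ℝ} (hc : 0 < c) :
    (c • A).PosDef := by
  refine Matrix.PosDef.of_dotProduct_mulVec_pos ?_ fun x hx => ?_
  · rw [Matrix.IsHermitian, Matrix.conjTranspose_smul, hA.1.eq, star_trivial]
  · rw [Matrix.smul_mulVec, dotProduct_smul, smul_eq_mul]
    exact mul_pos hc (hA.dotProduct_mulVec_pos hx)

lemma mySqrtSmul {A : Matrix n n ℝ} (hA : A.PosSemidef) {c : ℝ} (hc : 0 ≤ c)
    (hcA : (c • A).PosSemidef) : hcA.sqrt = Real.sqrt c • hA.sqrt := by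
  refine ((myPsdSmul hA.posSemidef_sqrt (Real.sqrt_nonneg c)).eq_sqrt_of_sq_eq hcA ?_).symm
  rw [pow_two, smul_mul_assoc, mul_smul_comm, smul_smul, Real.mul_self_sqrt hc,
    hA.sqrt_mul_self]

lemma myInvSmul {Q : Matrix n n ℝ} {c : ℝ} (hc : c ≠ 0) (hQd : IsUnit Q.det) :
    (c • Q)⁻¹ = c⁻¹ • Q⁻¹ := by
  apply Matrix.inv_eq_right_inv
  rw [smul_mul_assoc, mul_smul_comm, smul_smul, mul_inv_cancel₀ hc,
    Matrix.mul_nonsing_inv _ hQd, one_smul]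

lemma myMatSqrtEq {A : Matrix n n ℝ} (h : A.PosSemidef) : matSqrt A = h.sqrt := by
  unfold matSqrt
  split
  · rw [Matrix.PosSemidef.sqrt]
    congr!
  · exact absurd h ‹_›

lemma myMatInvSqrtEq {A : Matrix n n ℝ} (hA : A.PosDef) :
    matInvSqrt A = hA.inv.posSemidef.sqrt := by
  rw [matInvSqrt, myMatSqrtEq hA.posSemidef]
  refine (myPosDefSqrt hA).inv.posSemidef.eq_sqrt_of_sq_eq hA.inv.posSemidef ?_
  rw [pow_two, ← Matrix.mul_inv_rev, hA.posSemidef.sqrt_mul_self]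

open scoped Matrix.Norms.L2Operator

lemma myEuclidNormSq (z : n → ℝ) : ‖(EuclideanSpace.equiv n ℝ).symm z‖ ^ 2 = z ⬝ᵥ z := by
  rw [EuclideanSpace.norm_eq, Real.sq_sqrt (Finset.sum_nonneg fun _ _ => sq_nonneg _)]
  simp [dotProduct, sq]

lemma myEuclidInner (z w : n → ℝ) :
    (inner ℝ ((EuclideanSpace.equiv n ℝ).symm z) ((EuclideanSpace.equiv n ℝ).symm w) : ℝ)
      = z ⬝ᵥ w := by
  simp [PiLp.inner_apply, RCLike.inner_apply, dotProduct, mul_comm]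

/-- quadratic form bounded by operator norm -/
lemma myQuadLeNorm (M : Matrix n n ℝ) (x : n → ℝ) :
    x ⬝ᵥ M *ᵥ x ≤ ‖M‖ * (x ⬝ᵥ x) := by
  have h1 : x ⬝ᵥ M *ᵥ x
      = (inner ℝ ((EuclideanSpace.equiv n ℝ).symm x)
          ((EuclideanSpace.equiv n ℝ).symm (M *ᵥ x)) : ℝ) := (myEuclidInner _ _).symm
  have h2 := real_inner_le_norm ((EuclideanSpace.equiv n ℝ).symm x)
      ((EuclideanSpace.equiv n ℝ).symm (M *ᵥ x))
  have h3 := M.l2_opNorm_mulVec ((EuclideanSpace.equiv n ℝ).symm x)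
  have h4 : ‖(EuclideanSpace.equiv n ℝ).symm x‖ ^ 2 = x ⬝ᵥ x := myEuclidNormSq x
  have h5 : M *ᵥ ((EuclideanSpace.equiv n ℝ).symm x) = M *ᵥ x := rfl
  rw [h5] at h3
  nlinarith [norm_nonneg ((EuclideanSpace.equiv n ℝ).symm x),
    norm_nonneg ((EuclideanSpace.equiv n ℝ).symm (M *ᵥ x)), norm_nonneg M]

/-- operator norm of a PSD matrix bounded via its quadratic form -/
lemma myNormLeOfQuad {A : Matrix n n ℝ} (hA : A.PosSemidef) {c : ℝ} (hc : 0 ≤ c)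
    (h : ∀ x : n → ℝ, x ⬝ᵥ A *ᵥ x ≤ c * (x ⬝ᵥ x)) : ‖A‖ ≤ c := by
  rw [Matrix.l2_opNorm_def]
  refine ContinuousLinearMap.opNorm_le_bound _ hc fun x => ?_
  show ‖(EuclideanSpace.equiv n ℝ).symm (A *ᵥ x)‖ ≤ c * ‖x‖
  set y : n → ℝ := A *ᵥ x with hy
  set x0 : n → ℝ := x.ofLp with hx0
  have hxx : ‖x‖ = ‖(EuclideanSpace.equiv n ℝ).symm x0‖ := rfl
  set S := hA.sqrt with hS
  set ny := ‖(EuclideanSpace.equiv n ℝ).symm y‖ with hny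
  set nx := ‖(EuclideanSpace.equiv n ℝ).symm x0‖ with hnx
  set a := ‖(EuclideanSpace.equiv n ℝ).symm (S *ᵥ x0)‖ with ha
  set b := ‖(EuclideanSpace.equiv n ℝ).symm (S *ᵥ y)‖ with hb
  have hny0 : 0 ≤ ny := norm_nonneg _
  have hnx0 : 0 ≤ nx := norm_nonneg _
  have ha0 : 0 ≤ a := norm_nonneg _
  have hb0 : 0 ≤ b := norm_nonneg _
  have hab : ny ^ 2 ≤ a * b := by
    have e1 : ny ^ 2 = y ⬝ᵥ y := myEuclidNormSq y
    have e2 : y ⬝ᵥ y = x0 ⬝ᵥ A *ᵥ y := by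
      rw [mySymmDotLeft hA.isHermitian x0 y, ← hy, dotProduct_comm]
    have e3 : x0 ⬝ᵥ A *ᵥ y = (S *ᵥ x0) ⬝ᵥ (S *ᵥ y) := (myQuadSqrt hA x0 y).symm
    have e4 : (S *ᵥ x0) ⬝ᵥ (S *ᵥ y)
        = (inner ℝ ((EuclideanSpace.equiv n ℝ).symm (S *ᵥ x0))
            ((EuclideanSpace.equiv n ℝ).symm (S *ᵥ y)) : ℝ) := (myEuclidInner _ _).symm
    rw [e1, e2, e3, e4]
    exact real_inner_le_norm _ _
  have ha2 : a ^ 2 ≤ c * nx ^ 2 := by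
    have e1 : a ^ 2 = x0 ⬝ᵥ A *ᵥ x0 := by rw [myEuclidNormSq, myQuadSqrt hA]
    have e2 : nx ^ 2 = x0 ⬝ᵥ x0 := myEuclidNormSq x0
    rw [e1, e2]; exact h x0
  have hb2 : b ^ 2 ≤ c * ny ^ 2 := by
    have e1 : b ^ 2 = y ⬝ᵥ A *ᵥ y := by rw [myEuclidNormSq, myQuadSqrt hA]
    have e2 : ny ^ 2 = y ⬝ᵥ y := myEuclidNormSq y
    rw [e1, e2]; exact h y
  rw [hxx]
  rcases hny0.eq_or_lt with h0 | h0
  · rw [← h0]; positivity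
  · refine le_of_pow_le_pow_left₀ two_ne_zero (by positivity) ?_
    have h7 : ny ^ 2 ≤ c ^ 2 * nx ^ 2 := by
      have := (mul_le_mul_iff_of_pos_right (by positivity : (0:ℝ) < ny ^ 2)).mp
        (by nlinarith : ny ^ 2 * ny ^ 2 ≤ (c ^ 2 * nx ^ 2) * ny ^ 2)
      exact this
    calc ny ^ 2 ≤ c ^ 2 * nx ^ 2 := h7
      _ = (c * nx) ^ 2 := by ring

/-- norm monotonicity in the Loewner order -/
lemma myNormMono {A B : Matrix n n ℝ} (hA : A.PosSemidef) (hBA : (B - A).PosSemidef) :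
    ‖A‖ ≤ ‖B‖ := by
  refine myNormLeOfQuad hA (norm_nonneg B) fun x => ?_
  have h1 : 0 ≤ x ⬝ᵥ (B - A) *ᵥ x := by simpa using hBA.dotProduct_mulVec_nonneg x
  have h2 : x ⬝ᵥ B *ᵥ x ≤ ‖B‖ * (x ⬝ᵥ x) := myQuadLeNorm B x
  have h3 : x ⬝ᵥ (B - A) *ᵥ x = x ⬝ᵥ B *ᵥ x - x ⬝ᵥ A *ᵥ x := by
    rw [Matrix.sub_mulVec, dotProduct_sub]
  linarith

end Aux

/-- If `(1 − ε)·Q ⪯ P ⪯ (1 + ε)·Q` for symmetric positive definite `P, Q`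
and `ε ∈ [0,1)`, then
`‖P^{−1/2} − (1+ε)^{−1/2}·Q^{−1/2}‖ ≤ ((1−ε)^{−1/2} − (1+ε)^{−1/2})·‖Q^{−1/2}‖`, and
consequently `‖P^{−1/2} − Q^{−1/2}‖ ≤ ((1−ε)^{−1/2} − 2(1+ε)^{−1/2} + 1)·‖Q^{−1/2}‖`. -/
theorem invsqrt_perturbation_bound
    (p : ℕ) (P Q : Matrix (Fin p) (Fin p) ℝ)
    (hP : P.PosDef) (hQ : Q.PosDef) (ε : ℝ) (hε0 : 0 ≤ ε) (hε1 : ε < 1)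
    (hlow : (P - (1 - ε) • Q).PosSemidef) (hup : ((1 + ε) • Q - P).PosSemidef) :
    ‖matInvSqrt P - (Real.sqrt (1 + ε))⁻¹ • matInvSqrt Q‖ ≤
        ((Real.sqrt (1 - ε))⁻¹ - (Real.sqrt (1 + ε))⁻¹) * ‖matInvSqrt Q‖ ∧
      ‖matInvSqrt P - matInvSqrt Q‖ ≤
        ((Real.sqrt (1 - ε))⁻¹ - 2 * (Real.sqrt (1 + ε))⁻¹ + 1) * ‖matInvSqrt Q‖ := by
  have h1e : (0:ℝ) < 1 - ε := by linarith
  have h2e : (0:ℝ) < 1 + ε := by linarith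
  have hQd : IsUnit Q.det := hQ.det_pos.ne'.isUnit
  set X := matInvSqrt P with hXdef
  set R := matInvSqrt Q with hRdef
  have hXeq : X = hP.inv.posSemidef.sqrt := myMatInvSqrtEq hP
  have hReq : R = hQ.inv.posSemidef.sqrt := myMatInvSqrtEq hQ
  -- inverse comparisons
  have hs1 : ((1 - ε) • Q).PosDef := myPdSmul hQ h1e
  have hs2 : ((1 + ε) • Q).PosDef := myPdSmul hQ h2e
  have step1 : (((1 - ε) • Q)⁻¹ - P⁻¹).PosSemidef := myInvAntitone hs1 hP hlow
  have step2 : (P⁻¹ - ((1 + ε) • Q)⁻¹).PosSemidef := myInvAntitone hP hs2 hup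
  rw [myInvSmul h1e.ne' hQd] at step1
  rw [myInvSmul h2e.ne' hQd] at step2
  -- sqrt comparisons
  have hQinvPsd : (Q⁻¹).PosSemidef := hQ.inv.posSemidef
  have hc1 : (0:ℝ) ≤ (1 - ε)⁻¹ := by positivity
  have hc2 : (0:ℝ) ≤ (1 + ε)⁻¹ := by positivity
  have hsm1 : ((1 - ε)⁻¹ • Q⁻¹).PosSemidef := myPsdSmul hQinvPsd hc1
  have hsm2 : ((1 + ε)⁻¹ • Q⁻¹).PosSemidef := myPsdSmul hQinvPsd hc2
  have sq1 : (hsm1.sqrt - hP.inv.posSemidef.sqrt).PosSemidef :=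
    mySqrtMono hP.inv.posSemidef hsm1 step1
  have sq2 : (hP.inv.posSemidef.sqrt - hsm2.sqrt).PosSemidef :=
    mySqrtMono hsm2 hP.inv.posSemidef step2
  have e1 : hsm1.sqrt = (Real.sqrt (1 - ε))⁻¹ • R := by
    rw [mySqrtSmul hQinvPsd hc1 hsm1, Real.sqrt_inv, hReq]
  have e2 : hsm2.sqrt = (Real.sqrt (1 + ε))⁻¹ • R := by
    rw [mySqrtSmul hQinvPsd hc2 hsm2, Real.sqrt_inv, hReq]
  rw [e1, ← hXeq] at sq1
  rw [e2, ← hXeq] at sq2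
  set d1 := (Real.sqrt (1 - ε))⁻¹ with hd1
  set d2 := (Real.sqrt (1 + ε))⁻¹ with hd2
  have hsq1pos : (0:ℝ) < Real.sqrt (1 - ε) := Real.sqrt_pos.mpr h1e
  have hsq2pos : (0:ℝ) < Real.sqrt (1 + ε) := Real.sqrt_pos.mpr h2e
  have hd12 : d2 ≤ d1 := by
    rw [hd1, hd2]
    exact inv_anti₀ hsq1pos (Real.sqrt_le_sqrt (by linarith))
  have hd2pos : 0 < d2 := by rw [hd2]; positivity
  have hd21 : d2 ≤ 1 := by
    rw [hd2]
    apply inv_le_one_of_one_le₀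
    nlinarith [Real.sq_sqrt h2e.le, Real.sqrt_nonneg (1 + ε)]
  -- part 1
  have hdiff : (d1 - d2) • R - (X - d2 • R) = d1 • R - X := by
    rw [sub_smul]; abel
  have hBA : ((d1 - d2) • R - (X - d2 • R)).PosSemidef := by rw [hdiff]; exact sq1
  have part1 : ‖X - d2 • R‖ ≤ (d1 - d2) * ‖R‖ := by
    have := myNormMono sq2 hBA
    rwa [norm_smul, Real.norm_eq_abs, abs_of_nonneg (by linarith : (0:ℝ) ≤ d1 - d2)] at this
  refine ⟨part1, ?_⟩
  -- part 2
  have tri : ‖X - R‖ ≤ ‖X - d2 • R‖ + ‖d2 • R - R‖ := by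
    have hsplit : X - R = (X - d2 • R) + (d2 • R - R) := by abel
    rw [hsplit]; exact norm_add_le _ _
  have h8 : ‖d2 • R - R‖ = (1 - d2) * ‖R‖ := by
    have hrw : d2 • R - R = (-(1 - d2)) • R := by
      rw [neg_smul, sub_smul, one_smul, neg_sub]
    rw [hrw, norm_smul, Real.norm_eq_abs, abs_neg, abs_of_nonneg (by linarith)]
  have hfin : (d1 - d2) * ‖R‖ + (1 - d2) * ‖R‖ = (d1 - 2 * d2 + 1) * ‖R‖ := by ring
  linarith
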